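/- Let p and q be probability distributions on a finite set X with ||p - q||_1 ≤ 1/2. Then |H(p) - H(q)| ≤ ||p-q||_1 · ln(|X| / ||p-q||_1), where H denotes Shannon entropy in nats. -/

import Mathlib

open BigOperators Finset Real

def IsPMF {X : Type*} [Fintype X] (p : X → ℝ) : Prop :=
  (∀ x, 0 ≤ p x) ∧ ∑ x, p x = 1

noncomputable def ent {α : Type*} [Fintype α] (p : α → ℝ) : ℝ :=
  -∑ a, p a * Real.log (p a)

-- For t ∈ [0,1/2], negMulLog (1-t) ≤ negMulLog t, by concavity of t ↦ η t - η (1-t).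
lemma etaB {t : ℝ} (ht : 0 ≤ t) (ht2 : t ≤ 1/2) :
    Real.negMulLog (1 - t) ≤ Real.negMulLog t := by
  set h : ℝ → ℝ := fun s => Real.negMulLog s - Real.negMulLog (1 - s) with hh
  have hder : ∀ x ∈ Set.Ioo (0:ℝ) (1/2), HasDerivAt h (-(2 + log x + log (1-x))) x := by
    intro x hx
    have hx0 : x ≠ 0 := ne_of_gt hx.1
    have hx1 : (1:ℝ) - x ≠ 0 := by have := hx.2; norm_num at this ⊢; linarith
    have d1 := Real.hasDerivAt_negMulLog hx0
    have d2 : HasDerivAt (fun s : ℝ => Real.negMulLog (1 - s))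
        ((-log (1-x) - 1) * (-1)) x := by
      exact (Real.hasDerivAt_negMulLog hx1).comp x
        (((hasDerivAt_id x).const_sub 1))
    have := d1.sub d2
    refine this.congr_deriv ?_
    ring
  have hcont : ContinuousOn h (Set.Icc 0 (1/2)) := by
    apply Continuous.continuousOn
    exact Real.continuous_negMulLog.sub
      (Real.continuous_negMulLog.comp (continuous_const.sub continuous_id))
  have hint : interior (Set.Icc (0:ℝ) (1/2)) = Set.Ioo 0 (1/2) := interior_Icc
  have hconc : ConcaveOn ℝ (Set.Icc (0:ℝ) (1/2)) h := by
    apply AntitoneOn.concaveOn_of_deriv (convex_Icc _ _) hcont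
    · rw [hint]
      intro x hx
      exact ((hder x hx).differentiableAt.differentiableWithinAt)
    · rw [hint]
      intro x hx y hy hxy
      rw [(hder x hx).deriv, (hder y hy).deriv]
      have hxx : (0:ℝ) < x * (1 - x) := by nlinarith [hx.1, hx.2]
      have hyy : x * (1 - x) ≤ y * (1 - y) := by nlinarith [hx.1, hx.2, hy.1, hy.2]
      have : log (x * (1-x)) ≤ log (y * (1-y)) := Real.log_le_log hxx hyy
      rw [Real.log_mul (ne_of_gt hx.1) (by nlinarith [hx.2]),
        Real.log_mul (ne_of_gt (lt_of_lt_of_le hx.1 hxy)) (by nlinarith [hy.2])] at this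
      linarith
  have h0 : h 0 = 0 := by simp [hh]
  have h12 : h (1/2) = 0 := by norm_num [hh]
  have hmem : t ∈ segment ℝ (0:ℝ) (1/2) := by
    rw [segment_eq_Icc (by norm_num : (0:ℝ) ≤ 1/2)]
    exact ⟨ht, ht2⟩
  have := hconc.ge_on_segment (by constructor <;> norm_num) (by constructor <;> norm_num) hmem
  rw [h0, h12] at this
  simp only [min_self] at this
  have : 0 ≤ h t := this
  simp only [hh] at this
  linarith

lemma eta_upper {a t : ℝ} (ha : 0 ≤ a) (ht : 0 ≤ t) :
    Real.negMulLog (a + t) - Real.negMulLog a ≤ Real.negMulLog t := by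
  have h1 : -(a * log (a + t)) ≤ -(a * log a) := by
    rcases eq_or_lt_of_le ha with h | h
    · simp [← h]
    · have : log a ≤ log (a + t) := Real.log_le_log h (by linarith)
      nlinarith
  have h2 : -(t * log (a + t)) ≤ -(t * log t) := by
    rcases eq_or_lt_of_le ht with h | h
    · simp [← h]
    · have : log t ≤ log (a + t) := Real.log_le_log h (by linarith)
      nlinarith
  simp only [Real.negMulLog, neg_mul]
  nlinarith [h1, h2]

lemma eta_lower {a t : ℝ} (ha : 0 ≤ a) (ht : 0 < t) (ht2 : t ≤ 1/2) (hat : a + t ≤ 1) :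
    Real.negMulLog a - Real.negMulLog (a + t) ≤ Real.negMulLog t := by
  set g : ℝ → ℝ := fun s => Real.negMulLog s - Real.negMulLog (s + t) with hg
  have hder : ∀ x ∈ Set.Ioo (0:ℝ) (1 - t), HasDerivAt g (-log x - 1 - (-log (x + t) - 1)) x := by
    intro x hx
    have hx0 : x ≠ 0 := ne_of_gt hx.1
    have hxt : x + t ≠ 0 := by nlinarith [hx.1]
    have d2 : HasDerivAt (fun s : ℝ => Real.negMulLog (s + t)) ((-log (x+t) - 1) * 1) x :=
      HasDerivAt.comp (h₂ := Real.negMulLog) x (Real.hasDerivAt_negMulLog hxt) ((hasDerivAt_id x).add_const t)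
    exact ((Real.hasDerivAt_negMulLog hx0).sub d2).congr_deriv (by ring)
  have hmono : MonotoneOn g (Set.Icc 0 (1 - t)) := by
    apply monotoneOn_of_deriv_nonneg (convex_Icc _ _)
    · exact (Real.continuous_negMulLog.sub
        (Real.continuous_negMulLog.comp (continuous_id.add continuous_const))).continuousOn
    · rw [interior_Icc]
      intro x hx
      exact (hder x hx).differentiableAt.differentiableWithinAt
    · rw [interior_Icc]
      intro x hx
      rw [(hder x hx).deriv]
      have : log x ≤ log (x + t) := Real.log_le_log hx.1 (by linarith)
      linarith
  have hmem1 : a ∈ Set.Icc (0:ℝ) (1 - t) := ⟨ha, by linarith⟩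
  have hmem2 : (1 - t) ∈ Set.Icc (0:ℝ) (1 - t) := ⟨by linarith, le_refl _⟩
  have := hmono hmem1 hmem2 (by linarith)
  have hg1 : g (1 - t) = Real.negMulLog (1 - t) := by simp [hg]
  rw [hg1] at this
  calc Real.negMulLog a - Real.negMulLog (a + t) ≤ Real.negMulLog (1 - t) := this
    _ ≤ Real.negMulLog t := etaB ht.le ht2

lemma eta_abs {a b : ℝ} (ha : 0 ≤ a) (hb : 0 ≤ b) (ha1 : a ≤ 1) (hb1 : b ≤ 1)
    (hab : |a - b| ≤ 1/2) :
    |Real.negMulLog a - Real.negMulLog b| ≤ Real.negMulLog |a - b| := by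
  wlog h : a ≤ b generalizing a b
  · rw [abs_sub_comm, abs_sub_comm a b]
    exact this hb ha hb1 ha1 (by rwa [abs_sub_comm]) (le_of_not_ge h)
  rcases eq_or_lt_of_le h with h' | h'
  · simp [h']
  set t := b - a with htdef
  have ht : 0 < t := by simp only [htdef]; linarith
  have habs : |a - b| = t := by rw [abs_sub_comm]; exact abs_of_pos ht
  rw [habs]
  have ht2 : t ≤ 1/2 := habs ▸ hab
  have hbeq : b = a + t := by simp only [htdef]; ring
  rw [abs_le]
  constructor
  · have := eta_upper ha ht.le
    rw [← hbeq] at this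
    linarith
  · have := eta_lower ha ht ht2 (hbeq ▸ hb1)
    rw [← hbeq] at this
    linarith

lemma perterm {t d n : ℝ} (ht : 0 ≤ t) (hd : 0 < d) (hn : 0 < n) :
    Real.negMulLog t ≤ t * Real.log n - t * Real.log d + (d / n - t) := by
  rcases eq_or_lt_of_le ht with h | h
  · simp only [← h, Real.negMulLog_zero, zero_mul, sub_zero, sub_self, zero_add]
    positivity
  · have hpos : 0 < d / (n * t) := by positivity
    have hlog := Real.log_le_sub_one_of_pos hpos
    have hkey : t * (d / (n * t) - 1) = d / n - t := by
      field_simp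
    have h2 : t * log (d / (n * t)) ≤ d / n - t := by
      rw [← hkey]
      exact mul_le_mul_of_nonneg_left hlog ht
    rw [Real.log_div (ne_of_gt hd) (by positivity),
      Real.log_mul (ne_of_gt hn) (ne_of_gt h)] at h2
    simp only [Real.negMulLog, neg_mul]
    nlinarith [h2]

lemma ent_eq {α : Type*} [Fintype α] (p : α → ℝ) :
    ent p = ∑ a, Real.negMulLog (p a) := by
  simp [ent, Real.negMulLog, neg_mul, Finset.sum_neg_distrib]

/-- L1 bound on the continuity of entropy: if `‖p - q‖₁ ≤ 1/2` then
`|H(p) - H(q)| ≤ ‖p-q‖₁ · ln(|X| / ‖p-q‖₁)`. -/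
theorem stmt0 {X : Type*} [Fintype X] (p q : X → ℝ)
    (hp : IsPMF p) (hq : IsPMF q)
    (h : ∑ x, |p x - q x| ≤ 1 / 2) :
    |ent p - ent q| ≤
      (∑ x, |p x - q x|) * Real.log ((Fintype.card X : ℝ) / ∑ x, |p x - q x|) := by
  classical
  set d := ∑ x, |p x - q x| with hd
  have hd0 : 0 ≤ d := Finset.sum_nonneg fun x _ => abs_nonneg _
  have hp1 : ∀ x, p x ≤ 1 := by
    intro x
    rw [← hp.2]
    exact Finset.single_le_sum (fun y _ => hp.1 y) (Finset.mem_univ x)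
  have hq1 : ∀ x, q x ≤ 1 := by
    intro x
    rw [← hq.2]
    exact Finset.single_le_sum (fun y _ => hq.1 y) (Finset.mem_univ x)
  have hterm : ∀ x, |p x - q x| ≤ d :=
    fun x => Finset.single_le_sum (fun y _ => abs_nonneg (p y - q y)) (Finset.mem_univ x)
  have step1 : |ent p - ent q| ≤ ∑ x, Real.negMulLog |p x - q x| := by
    rw [ent_eq, ent_eq, ← Finset.sum_sub_distrib]
    refine (Finset.abs_sum_le_sum_abs _ _).trans (Finset.sum_le_sum fun x _ => ?_)
    exact eta_abs (hp.1 x) (hq.1 x) (hp1 x) (hq1 x) ((hterm x).trans h)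
  rcases eq_or_lt_of_le hd0 with hzero | hpos
  · have hall : ∀ x ∈ Finset.univ, |p x - q x| = 0 := by
      rw [← Finset.sum_eq_zero_iff_of_nonneg (fun x _ => abs_nonneg (p x - q x)), ← hd, ← hzero]
    have : |ent p - ent q| ≤ 0 := by
      refine step1.trans (le_of_eq ?_)
      exact Finset.sum_eq_zero fun x hx => by rw [hall x hx, Real.negMulLog_zero]
    rw [← hzero, zero_mul]
    exact this
  · have hne : Nonempty X := by
      by_contra hne
      simp only [not_nonempty_iff] at hne
      rw [hd, Finset.univ_eq_empty, Finset.sum_empty] at hpos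
      exact lt_irrefl _ hpos
    have hn : (0:ℝ) < (Fintype.card X : ℝ) := by
      exact_mod_cast Fintype.card_pos
    have step2 : ∑ x, Real.negMulLog |p x - q x| ≤
        ∑ x, (|p x - q x| * Real.log (Fintype.card X) - |p x - q x| * Real.log d
          + (d / (Fintype.card X) - |p x - q x|)) :=
      Finset.sum_le_sum fun x _ => perterm (abs_nonneg _) hpos hn
    have step3 : ∑ x, (|p x - q x| * Real.log (Fintype.card X) - |p x - q x| * Real.log d
          + (d / (Fintype.card X) - |p x - q x|))
        = d * Real.log ((Fintype.card X : ℝ) / d) := by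
      rw [Finset.sum_add_distrib, Finset.sum_sub_distrib, ← Finset.sum_mul, ← Finset.sum_mul,
        Finset.sum_sub_distrib, Finset.sum_const, Finset.card_univ, nsmul_eq_mul, ← hd,
        Real.log_div (ne_of_gt hn) (ne_of_gt hpos)]
      field_simp
      ring
    calc |ent p - ent q| ≤ ∑ x, Real.negMulLog |p x - q x| := step1
      _ ≤ _ := step2
      _ = d * Real.log ((Fintype.card X : ℝ) / d) := step3
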